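/- arXiv:1712.00395 — 2 statements merged into one kernel-verified Lean document; each statement's English description precedes it below -/
import Mathlib

section
/- Non-reconstruction holds for the broadcast process on the d-ary tree if and only if lim_{n→∞} x_n = 0, where x_n = E[f_n(1, σ^1(n))] − π1. -/
open Finset Filter

namespace AsymIsing

/-- Level-`k` vertices of the rooted `d`-ary tree: paths of length `k` from the root. -/
abbrev Vert (d k : ℕ) : Type := Fin k → Fin d

/-- A spin configuration on levels `0, …, n` of the `d`-ary tree. -/
abbrev Conf (d n : ℕ) : Type := ∀ k : Fin (n + 1), Vert d k → Fin 2

/-- A spin configuration on level `n` only. -/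
abbrev LConf (d n : ℕ) : Type := Vert d n → Fin 2

/-- The transition matrix of the asymmetric binary channel; the paper's state `1`
corresponds to the index `0` and the state `2` to the index `1`. -/
noncomputable def Mmat (θ Δ : ℝ) : Fin 2 → Fin 2 → ℝ := fun i j =>
  if i = 0 then (if j = 0 then (1 + θ - Δ) / 2 else (1 - θ + Δ) / 2)
  else (if j = 0 then (1 - θ - Δ) / 2 else (1 + θ + Δ) / 2)

/-- The stationary distribution `π = (π₁, π₂)` of the channel. -/
noncomputable def pst (θ Δ : ℝ) : Fin 2 → ℝ := fun i =>
  if i = 0 then 1 / 2 - Δ / (2 * (1 - θ)) else 1 / 2 + Δ / (2 * (1 - θ))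

/-- The root spin of a configuration. -/
def root {d n : ℕ} (σ : Conf d n) : Fin 2 := σ ⟨0, n.succ_pos⟩ (fun i => i.elim0)

/-- The restriction of a configuration to the last (`n`-th) level. -/
def top {d n : ℕ} (σ : Conf d n) : LConf d n := σ (Fin.last n)

/-- The probability of a full configuration on levels `0, …, n` under the broadcast
process: the root is drawn from `π` and spins propagate along edges via `M`. -/
noncomputable def confProb (d : ℕ) (θ Δ : ℝ) (n : ℕ) (σ : Conf d n) : ℝ :=
  pst θ Δ (root σ) *
    ∏ k : Fin n, ∏ v : Vert d (k + 1),
      Mmat θ Δ (σ k.castSucc (v ∘ Fin.castSucc)) (σ k.succ v)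

/-- `P(σ(n) = A)`: the marginal law of the level-`n` spins. -/
noncomputable def levelProb (d : ℕ) (θ Δ : ℝ) (n : ℕ) (A : LConf d n) : ℝ :=
  ∑ σ : Conf d n, if top σ = A then confProb d θ Δ n σ else 0

/-- `P(σ_ρ = i, σ(n) = A)`. -/
noncomputable def jointProb (d : ℕ) (θ Δ : ℝ) (n : ℕ) (i : Fin 2) (A : LConf d n) : ℝ :=
  ∑ σ : Conf d n, if root σ = i ∧ top σ = A then confProb d θ Δ n σ else 0

/-- The posterior `f_n(i, A) = P(σ_ρ = i ∣ σ(n) = A)`. -/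
noncomputable def post (d : ℕ) (θ Δ : ℝ) (n : ℕ) (i : Fin 2) (A : LConf d n) : ℝ :=
  jointProb d θ Δ n i A / levelProb d θ Δ n A

/-- The law of `σ^i(n)`, i.e. `P(σ(n) = A ∣ σ_ρ = i)`. -/
noncomputable def condLevel (d : ℕ) (θ Δ : ℝ) (n : ℕ) (i : Fin 2) (A : LConf d n) : ℝ :=
  jointProb d θ Δ n i A / pst θ Δ i

/-- The total variation distance between `σ^1(n)` and `σ^2(n)`. -/
noncomputable def tvDist (d : ℕ) (θ Δ : ℝ) (n : ℕ) : ℝ :=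
  (1 / 2) * ∑ A : LConf d n, |condLevel d θ Δ n 0 A - condLevel d θ Δ n 1 A|

/-- The reconstruction problem is solvable if `limsup_n d_TV(σ^1(n), σ^2(n)) > 0`. -/
def solvable (d : ℕ) (θ Δ : ℝ) : Prop :=
  0 < Filter.limsup (fun n => tvDist d θ Δ n) Filter.atTop

/-- Non-reconstruction: `limsup_n d_TV(σ^1(n), σ^2(n)) = 0`. -/
def nonReconstruction (d : ℕ) (θ Δ : ℝ) : Prop :=
  Filter.limsup (fun n => tvDist d θ Δ n) Filter.atTop = 0

/-- Expectation of a function of the level-`n` configuration, conditioned on `σ_ρ = 1`. -/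
noncomputable def expect1 (d : ℕ) (θ Δ : ℝ) (n : ℕ) (g : LConf d n → ℝ) : ℝ :=
  ∑ A : LConf d n, condLevel d θ Δ n 0 A * g A

/-- `x_n = E f_n(1, σ^1(n)) − π₁`. -/
noncomputable def xseq (d : ℕ) (θ Δ : ℝ) (n : ℕ) : ℝ :=
  expect1 d θ Δ n (fun A => post d θ Δ n 0 A) - pst θ Δ 0

/-- `z_n = E (f_n(1, σ^1(n)) − π₁)²`. -/
noncomputable def zseq (d : ℕ) (θ Δ : ℝ) (n : ℕ) : ℝ :=
  expect1 d θ Δ n (fun A => (post d θ Δ n 0 A - pst θ Δ 0) ^ 2)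

/-- The restriction of a level-`(n+1)` configuration to the subtree of the `j`-th
child of the root (paths starting with `j`). -/
def restrictChild {d n : ℕ} (j : Fin d) (A : LConf d (n + 1)) : LConf d n :=
  fun w => A (Fin.cons j w)

/-- `Y_j = f_n(1, σ_j(n+1))`, as a function of the level-`(n+1)` configuration. -/
noncomputable def Yfun (d : ℕ) (θ Δ : ℝ) (n : ℕ) (j : Fin d) (A : LConf d (n + 1)) : ℝ :=
  post d θ Δ n 0 (restrictChild j A)

/-- `Z₁ = ∏_j (1 + (θ/π₁)(Y_j − π₁))`, as a function of the level-`(n+1)` configuration. -/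
noncomputable def Z1fun (d : ℕ) (θ Δ : ℝ) (n : ℕ) (A : LConf d (n + 1)) : ℝ :=
  ∏ j : Fin d, (1 + (θ / pst θ Δ 0) * (Yfun d θ Δ n j A - pst θ Δ 0))

/-- `Z₂ = ∏_j (1 − (θ/π₂)(Y_j − π₁))`, as a function of the level-`(n+1)` configuration. -/
noncomputable def Z2fun (d : ℕ) (θ Δ : ℝ) (n : ℕ) (A : LConf d (n + 1)) : ℝ :=
  ∏ j : Fin d, (1 - (θ / pst θ Δ 1) * (Yfun d θ Δ n j A - pst θ Δ 0))

/-- The value of `Δ` making `π = (π₁, π₂)` the stationary distribution of the channel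
with second eigenvalue `θ`, namely `Δ = (1 − θ)(π₂ − π₁)`. -/
noncomputable def Dlt (θ π1 π2 : ℝ) : ℝ := (1 - θ) * (π2 - π1)

/-- The Gaussian-approximation function
`f(s) = E[π₁ e^{sμ₁+√s W₁} / (π₁ e^{sμ₁+√s W₁} + π₂ e^{sμ₂+√s W₂})] − π₁`,
where `μ₁ = 1/(2π₁)`, `μ₂ = −(1+π₂)/(2π₂²)`, `W₁ ∼ N(0, 1/π₁)` (realized as `w/√π₁`
for `w` standard Gaussian) and `W₂ = −(π₁/π₂)·W₁`. -/
noncomputable def gfun (π1 π2 : ℝ) (s : ℝ) : ℝ :=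
  (∫ w : ℝ,
      (π1 * Real.exp (s * (1 / (2 * π1)) + Real.sqrt s * (w / Real.sqrt π1))) /
        (π1 * Real.exp (s * (1 / (2 * π1)) + Real.sqrt s * (w / Real.sqrt π1)) +
          π2 * Real.exp (s * (-(1 + π2) / (2 * π2 ^ 2)) +
            Real.sqrt s * (-(π1 / π2) * (w / Real.sqrt π1))))
    ∂(ProbabilityTheory.gaussianReal 0 1)) - π1

section Aux

noncomputable def Wprod (d : ℕ) (θ Δ : ℝ) (n : ℕ) (σ : Conf d n) : ℝ :=
  ∏ k : Fin n, ∏ v : Vert d (k + 1),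
    Mmat θ Δ (σ k.castSucc (v ∘ Fin.castSucc)) (σ k.succ v)

lemma confProb_eq (d : ℕ) (θ Δ : ℝ) (n : ℕ) (σ : Conf d n) :
    confProb d θ Δ n σ = pst θ Δ (root σ) * Wprod d θ Δ n σ := rfl

def splitConf (d n : ℕ) : Conf d (n + 1) ≃ Conf d n × LConf d (n + 1) where
  toFun σ := (fun k => σ k.castSucc, σ (Fin.last (n + 1)))
  invFun p := fun k => Fin.lastCases (motive := fun k : Fin (n + 2) => Vert d k → Fin 2) p.2 p.1 k
  left_inv σ := by
    funext k
    induction k using Fin.lastCases with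
    | last => simp
    | cast k => simp
  right_inv p := by
    refine Prod.ext ?_ ?_
    · funext k; simp
    · simp

lemma splitConf_symm_castSucc {d n : ℕ} (p : Conf d n × LConf d (n + 1)) (k : Fin (n + 1)) :
    (splitConf d n).symm p k.castSucc = p.1 k := by
  simp [splitConf]

lemma splitConf_symm_last {d n : ℕ} (p : Conf d n × LConf d (n + 1)) :
    (splitConf d n).symm p (Fin.last (n + 1)) = p.2 := by
  simp [splitConf]

lemma root_splitConf_symm {d n : ℕ} (p : Conf d n × LConf d (n + 1)) :
    root ((splitConf d n).symm p) = root p.1 :=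
  congrFun (splitConf_symm_castSucc p ⟨0, Nat.succ_pos n⟩) _

end Aux
section Aux2

lemma Wprod_split {d : ℕ} {θ Δ : ℝ} {n : ℕ} (τ : Conf d n) (B : LConf d (n + 1)) :
    Wprod d θ Δ (n + 1) ((splitConf d n).symm (τ, B)) =
      Wprod d θ Δ n τ *
        ∏ v : Vert d (n + 1), Mmat θ Δ (τ (Fin.last n) (v ∘ Fin.castSucc)) (B v) := by
  set σ := (splitConf d n).symm (τ, B) with hσ
  have hc : ∀ k : Fin (n + 1), σ k.castSucc = τ k := fun k => splitConf_symm_castSucc (τ, B) k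
  unfold Wprod
  rw [Fin.prod_univ_castSucc]
  congr 1
  · refine Finset.prod_congr rfl fun k _ => ?_
    have h1 : σ (k.castSucc).castSucc = τ k.castSucc := hc k.castSucc
    have h2 : σ (k.castSucc).succ = τ k.succ := hc k.succ
    rw [h1, h2]; rfl
  · have h1 : σ (Fin.last n).castSucc = τ (Fin.last n) := hc (Fin.last n)
    have h2 : σ (Fin.last n).succ = B := splitConf_symm_last (τ, B)
    rw [h1, h2]; rfl

end Aux2
section Aux3

lemma Mrow {θ Δ : ℝ} (a : Fin 2) : Mmat θ Δ a 0 + Mmat θ Δ a 1 = 1 := by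
  fin_cases a <;> simp [Mmat] <;> ring

lemma pst_add {θ Δ : ℝ} : pst θ Δ 0 + pst θ Δ 1 = 1 := by
  simp [pst]; ring

lemma pst_pos {θ Δ : ℝ} (hθ1 : |θ| < 1) (hM : ∀ i j, 0 < Mmat θ Δ i j) (i : Fin 2) :
    0 < pst θ Δ i := by
  have hθ : θ < 1 := (abs_lt.1 hθ1).2
  have h1θ : (0:ℝ) < 1 - θ := by linarith
  fin_cases i
  · have h := hM 1 0
    simp only [Mmat] at h
    norm_num at h
    have heq : pst θ Δ 0 = (1 - θ - Δ) / (2 * (1 - θ)) := by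
      simp only [pst]; rw [if_pos trivial]; field_simp
    exact lt_of_lt_of_eq (div_pos (by linarith) (by linarith)) heq.symm
  · have h := hM 0 1
    simp only [Mmat] at h
    norm_num at h
    have heq : pst θ Δ 1 = (1 - θ + Δ) / (2 * (1 - θ)) := by
      simp only [pst]; rw [if_neg (by decide)]; field_simp
    exact lt_of_lt_of_eq (div_pos (by linarith) (by linarith)) heq.symm

lemma Wsum (d : ℕ) (θ Δ : ℝ) (hrow : ∀ a : Fin 2, Mmat θ Δ a 0 + Mmat θ Δ a 1 = 1) :
    ∀ (n : ℕ) (i : Fin 2),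
      (∑ σ : Conf d n, if root σ = i then Wprod d θ Δ n σ else 0) = 1 := by
  intro n
  induction n with
  | zero =>
    intro i
    have hbij : Function.Bijective (root (d := d) (n := 0)) := by
      constructor
      · intro σ τ h
        funext k v
        have hk : k = ⟨0, Nat.succ_pos 0⟩ := Fin.ext (by omega)
        subst hk
        have hv : v = (fun i => i.elim0) := Subsingleton.elim _ _
        rw [hv]
        exact h
      · intro i
        exact ⟨fun k v => i, rfl⟩
    have := Fintype.sum_bijective _ hbij
      (fun σ : Conf d 0 => if root σ = i then Wprod d θ Δ 0 σ else 0)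
      (fun j : Fin 2 => if j = i then 1 else 0)
      (fun σ => by simp [Wprod])
    rw [this]
    simp
  | succ n ih =>
    intro i
    rw [← Equiv.sum_comp (splitConf d n).symm
      (fun σ => if root σ = i then Wprod d θ Δ (n + 1) σ else 0), Fintype.sum_prod_type]
    have step : ∀ τ : Conf d n,
        (∑ B : LConf d (n + 1),
          if root ((splitConf d n).symm (τ, B)) = i
          then Wprod d θ Δ (n + 1) ((splitConf d n).symm (τ, B)) else 0) =
        if root τ = i then Wprod d θ Δ n τ else 0 := by
      intro τ
      have hsum : (∑ B : LConf d (n + 1),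
          ∏ v : Vert d (n + 1), Mmat θ Δ (τ (Fin.last n) (v ∘ Fin.castSucc)) (B v)) = 1 := by
        rw [← Fintype.prod_sum (fun (v : Vert d (n + 1)) (j : Fin 2) =>
          Mmat θ Δ (τ (Fin.last n) (v ∘ Fin.castSucc)) j)]
        have : ∀ v : Vert d (n + 1),
            (∑ j : Fin 2, Mmat θ Δ (τ (Fin.last n) (v ∘ Fin.castSucc)) j) = 1 := by
          intro v; rw [Fin.sum_univ_two]; exact hrow _
        rw [Finset.prod_congr rfl (fun v _ => this v)]
        simp
      calc (∑ B : LConf d (n + 1),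
          if root ((splitConf d n).symm (τ, B)) = i
          then Wprod d θ Δ (n + 1) ((splitConf d n).symm (τ, B)) else 0)
          = ∑ B : LConf d (n + 1),
            if root τ = i then Wprod d θ Δ n τ *
              ∏ v : Vert d (n + 1), Mmat θ Δ (τ (Fin.last n) (v ∘ Fin.castSucc)) (B v)
            else 0 := by
            refine Finset.sum_congr rfl fun B _ => ?_
            rw [root_splitConf_symm, Wprod_split]
        _ = if root τ = i then Wprod d θ Δ n τ else 0 := by
            split_ifs with h
            · rw [← Finset.mul_sum, hsum, mul_one]
            · simp
    rw [Finset.sum_congr rfl (fun τ _ => step τ)]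
    exact ih i

end Aux3
section Aux4

variable {d : ℕ} {θ Δ : ℝ}

lemma Wprod_nonneg (hM : ∀ i j, 0 < Mmat θ Δ i j) (n : ℕ) (σ : Conf d n) :
    0 ≤ Wprod d θ Δ n σ :=
  Finset.prod_nonneg fun k _ => Finset.prod_nonneg fun v _ => (hM _ _).le

lemma confProb_nonneg (hθ1 : |θ| < 1) (hM : ∀ i j, 0 < Mmat θ Δ i j) (n : ℕ) (σ : Conf d n) :
    0 ≤ confProb d θ Δ n σ := by
  rw [confProb_eq]
  exact mul_nonneg (pst_pos hθ1 hM _).le (Wprod_nonneg hM n σ)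

lemma jointProb_nonneg (hθ1 : |θ| < 1) (hM : ∀ i j, 0 < Mmat θ Δ i j) (n : ℕ) (i : Fin 2)
    (A : LConf d n) : 0 ≤ jointProb d θ Δ n i A := by
  refine Finset.sum_nonneg fun σ _ => ?_
  split_ifs
  · exact confProb_nonneg hθ1 hM n σ
  · exact le_refl _

lemma joint_add_level (n : ℕ) (A : LConf d n) :
    jointProb d θ Δ n 0 A + jointProb d θ Δ n 1 A = levelProb d θ Δ n A := by
  unfold jointProb levelProb
  rw [← Finset.sum_add_distrib]
  refine Finset.sum_congr rfl fun σ _ => ?_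
  have h : root σ = 0 ∨ root σ = 1 := by
    have h2 : ∀ j : Fin 2, j = 0 ∨ j = 1 := by decide
    exact h2 _
  rcases h with h | h <;> by_cases ht : top σ = A <;> simp [h, ht]

lemma sum_jointProb (hrow : ∀ a : Fin 2, Mmat θ Δ a 0 + Mmat θ Δ a 1 = 1) (n : ℕ) (i : Fin 2) :
    ∑ A : LConf d n, jointProb d θ Δ n i A = pst θ Δ i := by
  unfold jointProb
  rw [Finset.sum_comm]
  have h1 : ∀ σ : Conf d n,
      (∑ A : LConf d n, if root σ = i ∧ top σ = A then confProb d θ Δ n σ else 0) =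
      pst θ Δ i * (if root σ = i then Wprod d θ Δ n σ else 0) := by
    intro σ
    by_cases h : root σ = i
    · simp [h, confProb_eq, Finset.sum_ite_eq]
    · simp [h]
  rw [Finset.sum_congr rfl (fun σ _ => h1 σ), ← Finset.mul_sum, Wsum d θ Δ hrow n i, mul_one]

lemma sum_levelProb (hrow : ∀ a : Fin 2, Mmat θ Δ a 0 + Mmat θ Δ a 1 = 1) (n : ℕ) :
    ∑ A : LConf d n, levelProb d θ Δ n A = 1 := by
  have : ∀ A : LConf d n, levelProb d θ Δ n A
      = jointProb d θ Δ n 0 A + jointProb d θ Δ n 1 A := fun A => (joint_add_level n A).symm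
  rw [Finset.sum_congr rfl (fun A _ => this A), Finset.sum_add_distrib,
    sum_jointProb hrow n 0, sum_jointProb hrow n 1, pst_add]

lemma joint_le_level (hθ1 : |θ| < 1) (hM : ∀ i j, 0 < Mmat θ Δ i j) (n : ℕ) (A : LConf d n) :
    jointProb d θ Δ n 0 A ≤ levelProb d θ Δ n A := by
  rw [← joint_add_level n A]
  have := jointProb_nonneg hθ1 hM n 1 A
  linarith

lemma level_nonneg (hθ1 : |θ| < 1) (hM : ∀ i j, 0 < Mmat θ Δ i j) (n : ℕ) (A : LConf d n) :
    0 ≤ levelProb d θ Δ n A := by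
  rw [← joint_add_level n A]
  have h0 := jointProb_nonneg hθ1 hM n 0 A
  have h1 := jointProb_nonneg hθ1 hM n 1 A
  linarith

end Aux4
section Aux5

noncomputable def useq (d : ℕ) (θ Δ : ℝ) (n : ℕ) (A : LConf d n) : ℝ :=
  jointProb d θ Δ n 0 A - pst θ Δ 0 * levelProb d θ Δ n A

noncomputable def Sseq (d : ℕ) (θ Δ : ℝ) (n : ℕ) : ℝ :=
  ∑ A : LConf d n, |useq d θ Δ n A|

variable {d : ℕ} {θ Δ : ℝ}

lemma Sseq_nonneg (n : ℕ) : 0 ≤ Sseq d θ Δ n :=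
  Finset.sum_nonneg fun A _ => abs_nonneg _

lemma tvDist_eq (hθ1 : |θ| < 1) (hM : ∀ i j, 0 < Mmat θ Δ i j) (n : ℕ) :
    tvDist d θ Δ n = Sseq d θ Δ n / (2 * (pst θ Δ 0 * pst θ Δ 1)) := by
  have hp1 : 0 < pst θ Δ 0 := pst_pos hθ1 hM 0
  have hp2 : 0 < pst θ Δ 1 := pst_pos hθ1 hM 1
  have hps : pst θ Δ 0 + pst θ Δ 1 = 1 := pst_add
  have key : ∀ A : LConf d n,
      condLevel d θ Δ n 0 A - condLevel d θ Δ n 1 A =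
        useq d θ Δ n A / (pst θ Δ 0 * pst θ Δ 1) := by
    intro A
    have hJ : jointProb d θ Δ n 1 A = levelProb d θ Δ n A - jointProb d θ Δ n 0 A := by
      have := joint_add_level (θ := θ) (Δ := Δ) n A
      linarith
    have hb : pst θ Δ 1 = 1 - pst θ Δ 0 := by linarith
    have h2 : (1 : ℝ) - pst θ Δ 0 ≠ 0 := by rw [← hb]; exact hp2.ne'
    unfold condLevel useq
    rw [hJ, hb]
    field_simp
    ring
  unfold tvDist Sseq
  rw [Finset.sum_congr rfl fun A _ => by
    rw [key A, abs_div, abs_of_pos (mul_pos hp1 hp2)]]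
  rw [← Finset.sum_div]
  ring

lemma useq_abs_le (hθ1 : |θ| < 1) (hM : ∀ i j, 0 < Mmat θ Δ i j) (n : ℕ) (A : LConf d n) :
    |useq d θ Δ n A| ≤ levelProb d θ Δ n A := by
  have hp1 : 0 < pst θ Δ 0 := pst_pos hθ1 hM 0
  have hp2 : 0 < pst θ Δ 1 := pst_pos hθ1 hM 1
  have hps : pst θ Δ 0 + pst θ Δ 1 = 1 := pst_add
  have hJ0 : 0 ≤ jointProb d θ Δ n 0 A := jointProb_nonneg hθ1 hM n 0 A
  have hJL : jointProb d θ Δ n 0 A ≤ levelProb d θ Δ n A := joint_le_level hθ1 hM n A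
  have hL : 0 ≤ levelProb d θ Δ n A := level_nonneg hθ1 hM n A
  rw [abs_le]
  constructor <;> unfold useq <;> nlinarith

lemma Sseq_le_one (hθ1 : |θ| < 1) (hM : ∀ i j, 0 < Mmat θ Δ i j) (n : ℕ) :
    Sseq d θ Δ n ≤ 1 := by
  calc Sseq d θ Δ n ≤ ∑ A : LConf d n, levelProb d θ Δ n A :=
        Finset.sum_le_sum fun A _ => useq_abs_le hθ1 hM n A
    _ = 1 := sum_levelProb Mrow n

lemma xseq_eq (hθ1 : |θ| < 1) (hM : ∀ i j, 0 < Mmat θ Δ i j) (n : ℕ) :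
    xseq d θ Δ n =
      (∑ A : LConf d n, (useq d θ Δ n A) ^ 2 / levelProb d θ Δ n A) / pst θ Δ 0 := by
  have hp1 : 0 < pst θ Δ 0 := pst_pos hθ1 hM 0
  have key : ∀ A : LConf d n,
      condLevel d θ Δ n 0 A * post d θ Δ n 0 A =
        ((useq d θ Δ n A) ^ 2 / levelProb d θ Δ n A) / pst θ Δ 0 +
          2 * useq d θ Δ n A + pst θ Δ 0 * levelProb d θ Δ n A := by
    intro A
    unfold condLevel post useq
    by_cases hL : levelProb d θ Δ n A = 0
    · have hJ : jointProb d θ Δ n 0 A = 0 :=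
        le_antisymm (hL ▸ joint_le_level hθ1 hM n A) (jointProb_nonneg hθ1 hM n 0 A)
      rw [hL, hJ]
      simp
    · field_simp
      ring
  have hLsum : ∑ A : LConf d n, levelProb d θ Δ n A = 1 := sum_levelProb Mrow n
  have hJsum : ∑ A : LConf d n, jointProb d θ Δ n 0 A = pst θ Δ 0 := sum_jointProb Mrow n 0
  have husum : ∑ A : LConf d n, useq d θ Δ n A = 0 := by
    unfold useq
    rw [Finset.sum_sub_distrib, ← Finset.mul_sum, hLsum, hJsum]
    ring
  unfold xseq expect1
  rw [Finset.sum_congr rfl fun A _ => key A]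
  rw [Finset.sum_add_distrib, Finset.sum_add_distrib, ← Finset.sum_div, ← Finset.mul_sum,
    ← Finset.mul_sum, husum, hLsum]
  ring

lemma xseq_nonneg (hθ1 : |θ| < 1) (hM : ∀ i j, 0 < Mmat θ Δ i j) (n : ℕ) :
    0 ≤ xseq d θ Δ n := by
  rw [xseq_eq hθ1 hM n]
  have hp1 : 0 < pst θ Δ 0 := pst_pos hθ1 hM 0
  refine div_nonneg (Finset.sum_nonneg fun A _ => ?_) hp1.le
  exact div_nonneg (sq_nonneg _) (level_nonneg hθ1 hM n A)

lemma xseq_le (hθ1 : |θ| < 1) (hM : ∀ i j, 0 < Mmat θ Δ i j) (n : ℕ) :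
    xseq d θ Δ n ≤ Sseq d θ Δ n / pst θ Δ 0 := by
  have hp1 : 0 < pst θ Δ 0 := pst_pos hθ1 hM 0
  rw [xseq_eq hθ1 hM n]
  have h : ∀ A : LConf d n,
      (useq d θ Δ n A) ^ 2 / levelProb d θ Δ n A ≤ |useq d θ Δ n A| := by
    intro A
    by_cases hL : levelProb d θ Δ n A = 0
    · have : |useq d θ Δ n A| = 0 :=
        le_antisymm (hL ▸ useq_abs_le hθ1 hM n A) (abs_nonneg _)
      rw [hL, this]
      simp
    · have hLpos : 0 < levelProb d θ Δ n A := (level_nonneg hθ1 hM n A).lt_of_ne' hL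
      rw [div_le_iff₀ hLpos]
      calc (useq d θ Δ n A) ^ 2 = |useq d θ Δ n A| * |useq d θ Δ n A| := by
            rw [← sq_abs, sq]
        _ ≤ |useq d θ Δ n A| * levelProb d θ Δ n A := by
            exact mul_le_mul_of_nonneg_left (useq_abs_le hθ1 hM n A) (abs_nonneg _)
  exact div_le_div_of_nonneg_right (Finset.sum_le_sum fun A _ => h A) hp1.le

lemma Sseq_le_sqrt (hθ1 : |θ| < 1) (hM : ∀ i j, 0 < Mmat θ Δ i j) (n : ℕ) :
    Sseq d θ Δ n ≤ Real.sqrt (pst θ Δ 0 * xseq d θ Δ n) := by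
  have hp1 : 0 < pst θ Δ 0 := pst_pos hθ1 hM 0
  have hLnn : ∀ A : LConf d n, 0 ≤ levelProb d θ Δ n A := level_nonneg hθ1 hM n
  have hcs := Finset.sum_mul_sq_le_sq_mul_sq Finset.univ
    (fun A : LConf d n => Real.sqrt (levelProb d θ Δ n A))
    (fun A : LConf d n => |useq d θ Δ n A| / Real.sqrt (levelProb d θ Δ n A))
  have hfg : ∀ A : LConf d n,
      Real.sqrt (levelProb d θ Δ n A) *
        (|useq d θ Δ n A| / Real.sqrt (levelProb d θ Δ n A)) = |useq d θ Δ n A| := by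
    intro A
    by_cases hL : levelProb d θ Δ n A = 0
    · have hu : |useq d θ Δ n A| = 0 :=
        le_antisymm (hL ▸ useq_abs_le hθ1 hM n A) (abs_nonneg _)
      rw [hu]
      simp
    · rw [mul_div_cancel₀]
      exact Real.sqrt_ne_zero'.2 ((hLnn A).lt_of_ne' hL)
  have hf2 : ∀ A : LConf d n,
      Real.sqrt (levelProb d θ Δ n A) ^ 2 = levelProb d θ Δ n A :=
    fun A => Real.sq_sqrt (hLnn A)
  have hg2 : ∀ A : LConf d n,
      (|useq d θ Δ n A| / Real.sqrt (levelProb d θ Δ n A)) ^ 2 =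
        (useq d θ Δ n A) ^ 2 / levelProb d θ Δ n A := by
    intro A
    rw [div_pow, sq_abs, Real.sq_sqrt (hLnn A)]
  rw [Finset.sum_congr rfl fun A _ => hfg A, Finset.sum_congr rfl fun A _ => hf2 A,
    Finset.sum_congr rfl fun A _ => hg2 A, sum_levelProb Mrow n, one_mul] at hcs
  have hx : ∑ A : LConf d n, (useq d θ Δ n A) ^ 2 / levelProb d θ Δ n A =
      pst θ Δ 0 * xseq d θ Δ n := by
    rw [xseq_eq hθ1 hM n, mul_div_cancel₀ _ hp1.ne']
  rw [hx] at hcs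
  exact (Real.le_sqrt (Sseq_nonneg n) (mul_nonneg hp1.le (xseq_nonneg hθ1 hM n))).2 hcs

end Aux5
/-- Non-reconstruction holds if and only if `lim_n x_n = 0`. -/
theorem nonReconstruction_iff_xseq_tendsto_zero (d : ℕ) (hd : 2 ≤ d) (θ Δ : ℝ) (hθ0 : θ ≠ 0) (hθ1 : |θ| < 1)
    (hθΔ : |θ| + |Δ| ≤ 1) (hM : ∀ i j, 0 < Mmat θ Δ i j)
    (hord : pst θ Δ 1 ≤ pst θ Δ 0) :
    nonReconstruction d θ Δ ↔
      Filter.Tendsto (xseq d θ Δ) Filter.atTop (nhds 0) := by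
  have hp1 : 0 < pst θ Δ 0 := pst_pos hθ1 hM 0
  have hp2 : 0 < pst θ Δ 1 := pst_pos hθ1 hM 1
  have htvS : ∀ n, tvDist d θ Δ n = Sseq d θ Δ n / (2 * (pst θ Δ 0 * pst θ Δ 1)) :=
    tvDist_eq hθ1 hM
  have htvnn : ∀ n, 0 ≤ tvDist d θ Δ n := fun n => by
    rw [htvS n]
    exact div_nonneg (Sseq_nonneg n) (by positivity)
  unfold nonReconstruction
  constructor
  · intro hns
    have hbdd : Filter.IsBoundedUnder (· ≤ ·) Filter.atTop (fun n => tvDist d θ Δ n) :=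
      Filter.isBoundedUnder_of ⟨1 / (2 * (pst θ Δ 0 * pst θ Δ 1)), fun n => by
        rw [htvS n]
        exact div_le_div_of_nonneg_right (Sseq_le_one hθ1 hM n) (by positivity)⟩
    have hbdd' : Filter.IsBoundedUnder (· ≥ ·) Filter.atTop (fun n => tvDist d θ Δ n) :=
      Filter.isBoundedUnder_of ⟨0, fun n => htvnn n⟩
    have hliminf : Filter.liminf (fun n => tvDist d θ Δ n) Filter.atTop = 0 := by
      refine le_antisymm ((Filter.liminf_le_limsup hbdd hbdd').trans_eq hns) ?_
      exact Filter.le_liminf_of_le hbdd.isCoboundedUnder_ge (Filter.Eventually.of_forall htvnn)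
    have htvto : Filter.Tendsto (fun n => tvDist d θ Δ n) Filter.atTop (nhds 0) :=
      tendsto_of_liminf_eq_limsup hliminf hns hbdd hbdd'
    refine squeeze_zero (g := fun n => (2 * pst θ Δ 1) * tvDist d θ Δ n)
      (xseq_nonneg hθ1 hM) (fun n => ?_) ?_
    · show xseq d θ Δ n ≤ (2 * pst θ Δ 1) * tvDist d θ Δ n
      have h1 := xseq_le (d := d) hθ1 hM n
      rw [htvS n]
      have h2 : (2 * pst θ Δ 1) * (Sseq d θ Δ n / (2 * (pst θ Δ 0 * pst θ Δ 1))) =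
          Sseq d θ Δ n / pst θ Δ 0 := by
        field_simp
      rw [h2]
      exact h1
    · simpa using htvto.const_mul (2 * pst θ Δ 1)
  · intro hx
    have h1 : Filter.Tendsto (fun n => pst θ Δ 0 * xseq d θ Δ n) Filter.atTop (nhds 0) := by
      simpa using hx.const_mul (pst θ Δ 0)
    have h2 : Filter.Tendsto (fun n => Real.sqrt (pst θ Δ 0 * xseq d θ Δ n))
        Filter.atTop (nhds 0) := by
      have := (Real.continuous_sqrt.tendsto 0).comp h1
      simpa [Function.comp_def] using this
    have h3 : Filter.Tendsto
        (fun n => Real.sqrt (pst θ Δ 0 * xseq d θ Δ n) / (2 * (pst θ Δ 0 * pst θ Δ 1)))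
        Filter.atTop (nhds 0) := by
      simpa using h2.div_const (2 * (pst θ Δ 0 * pst θ Δ 1))
    have htvto : Filter.Tendsto (fun n => tvDist d θ Δ n) Filter.atTop (nhds 0) := by
      refine squeeze_zero htvnn (fun n => ?_) h3
      rw [htvS n]
      exact div_le_div_of_nonneg_right (Sseq_le_sqrt hθ1 hM n) (by positivity)
    exact htvto.limsup_eq

end AsymIsing
end

section
/- The function f is continuously differentiable and monotone increasing on the interval (0, π2]. -/
open Finset Filter

namespace AsymIsing

/-! ### Auxiliary material for Statement 17 -/

section GfunAux

open MeasureTheory Real Set ProbabilityTheory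
open scoped ENNReal NNReal

/-- The standard Gaussian density. -/
noncomputable def pden (x : ℝ) : ℝ := gaussianPDFReal 0 1 x

lemma pden_def (x : ℝ) : pden x = (Real.sqrt (2*π))⁻¹ * Real.exp (-x^2/2) := by
  simp [pden, gaussianPDFReal]

lemma pden_nonneg (x : ℝ) : 0 ≤ pden x := gaussianPDFReal_nonneg 0 1 x

lemma continuous_pden : Continuous pden := by
  simp only [funext pden_def]
  fun_prop

lemma integrable_pden : Integrable pden := integrable_gaussianPDFReal 0 1

lemma pden_neg (x : ℝ) : pden (-x) = pden x := by
  simp [pden_def]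

lemma pden_add (x σ : ℝ) : pden (x + σ) = Real.exp (-(σ^2/2) - σ*x) * pden x := by
  rw [pden_def, pden_def, mul_comm (Real.exp _), mul_assoc, ← Real.exp_add]
  congr 2
  ring

lemma integrable_abs_pden : Integrable (fun x => |x| * pden x) := by
  have h1 : Integrable (fun x : ℝ => (Real.sqrt (2*π))⁻¹ * Real.exp (-(1/4 : ℝ) * x^2)) :=
    (integrable_exp_neg_mul_sq (by norm_num)).const_mul _
  refine h1.mono' (continuous_abs.mul continuous_pden).aestronglyMeasurable ?_
  refine Filter.Eventually.of_forall fun x => ?_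
  rw [Real.norm_eq_abs, abs_of_nonneg (mul_nonneg (abs_nonneg x) (pden_nonneg x)), pden_def]
  have hx : |x| ≤ Real.exp (x^2/4) := by
    have h := Real.add_one_le_exp (x^2/4)
    nlinarith [sq_nonneg (|x| - 2), sq_abs x]
  calc |x| * ((Real.sqrt (2*π))⁻¹ * Real.exp (-x^2/2))
      ≤ Real.exp (x^2/4) * ((Real.sqrt (2*π))⁻¹ * Real.exp (-x^2/2)) := by
        apply mul_le_mul_of_nonneg_right hx
        positivity
    _ = (Real.sqrt (2*π))⁻¹ * Real.exp (-(1/4) * x^2) := by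
        rw [← mul_assoc, mul_comm (Real.exp _), mul_assoc, ← Real.exp_add]
        congr 2
        ring

/-- The simplified integrand `(1 + r e^{-σ²/2 - σx})⁻¹`. -/
noncomputable def Hfun (r σ x : ℝ) : ℝ := (1 + r * Real.exp (-(σ^2/2) - σ*x))⁻¹

/-- The `σ`-derivative of `Hfun`. -/
noncomputable def dHfun (r σ x : ℝ) : ℝ :=
  r * (σ + x) * Real.exp (-(σ^2/2) - σ*x) / (1 + r * Real.exp (-(σ^2/2) - σ*x))^2

lemma denom_pos {r : ℝ} (hr : 0 < r) (t : ℝ) : 0 < 1 + r * Real.exp t := by positivity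

lemma Hfun_nonneg {r : ℝ} (hr : 0 < r) (σ x : ℝ) : 0 ≤ Hfun r σ x :=
  le_of_lt (inv_pos.2 (denom_pos hr _))

lemma Hfun_le_one {r : ℝ} (hr : 0 < r) (σ x : ℝ) : Hfun r σ x ≤ 1 := by
  rw [Hfun]
  rw [inv_le_one₀ (denom_pos hr _)]
  nlinarith [Real.exp_pos (-(σ^2/2) - σ*x)]

lemma continuous_Hfun_x {r σ : ℝ} (hr : 0 < r) : Continuous (fun x => Hfun r σ x) := by
  apply Continuous.inv₀ (by fun_prop)
  exact fun x => ne_of_gt (denom_pos hr _)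

lemma continuous_dHfun_x {r σ : ℝ} (hr : 0 < r) : Continuous (fun x => dHfun r σ x) := by
  apply Continuous.div (by fun_prop) (by fun_prop)
  exact fun x => pow_ne_zero 2 (ne_of_gt (denom_pos hr _))

lemma continuousAt_dHfun_sigma {r : ℝ} (hr : 0 < r) (x σ₀ : ℝ) :
    ContinuousAt (fun σ => dHfun r σ x) σ₀ := by
  apply ContinuousAt.div (by fun_prop) (by fun_prop)
  exact pow_ne_zero 2 (ne_of_gt (denom_pos hr _))

lemma hasDerivAt_Hfun {r : ℝ} (hr : 0 < r) (x σ : ℝ) :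
    HasDerivAt (fun σ => Hfun r σ x) (dHfun r σ x) σ := by
  have h0 : HasDerivAt (fun σ : ℝ => -(σ^2/2) - σ*x) (-σ - x) σ := by
    have h1 : HasDerivAt (fun σ : ℝ => σ^2) (2*σ) σ := by simpa using hasDerivAt_pow 2 σ
    exact (show HasDerivAt (fun σ : ℝ => -(σ^2/2) - σ*x) (-(2*σ/2) - 1*x) σ from
      ((h1.div_const 2).neg.sub ((hasDerivAt_id σ).mul_const x))).congr_deriv (by ring)
  have h2 : HasDerivAt (fun σ => 1 + r * Real.exp (-(σ^2/2) - σ*x))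
      (r * (Real.exp (-(σ^2/2) - σ*x) * (-σ - x))) σ :=
    ((h0.exp).const_mul r).const_add 1
  have h3 : HasDerivAt (fun σ => (1 + r * Real.exp (-(σ^2/2) - σ*x))⁻¹)
      (-(r * (Real.exp (-(σ^2/2) - σ*x) * (-σ - x))) / (1 + r * Real.exp (-(σ^2/2) - σ*x))^2) σ :=
    h2.inv (ne_of_gt (denom_pos hr _))
  convert h3 using 1
  · rfl
  rw [dHfun]
  field_simp
  ring

lemma abs_dHfun_le {r : ℝ} (hr : 0 < r) (σ x : ℝ) : |dHfun r σ x| ≤ (|σ| + |x|) / 4 := by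
  rw [dHfun, abs_div, abs_mul, abs_mul]
  have hE := Real.exp_pos (-(σ^2/2) - σ*x)
  set E := Real.exp (-(σ^2/2) - σ*x) with hEdef
  have hd : 0 < 1 + r * E := by positivity
  rw [abs_of_pos (Real.exp_pos _), abs_of_pos hr, abs_of_pos (pow_pos hd 2)]
  rw [div_le_iff₀ (pow_pos hd 2)]
  have h1 : |σ + x| ≤ |σ| + |x| := abs_add_le σ x
  have h2 : r * E * 4 ≤ (1 + r * E)^2 := by nlinarith [sq_nonneg (1 - r * E)]
  calc r * |σ + x| * E ≤ r * (|σ| + |x|) * E :=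
      mul_le_mul_of_nonneg_right (mul_le_mul_of_nonneg_left h1 hr.le) hE.le
    _ = (|σ| + |x|) / 4 * (r * E * 4) := by ring
    _ ≤ (|σ| + |x|) / 4 * (1 + r * E)^2 := by
        apply mul_le_mul_of_nonneg_left h2
        positivity

/-- `Φ(σ) = E[H(σ, W)]` for a standard Gaussian `W`. -/
noncomputable def Phi (r σ : ℝ) : ℝ := ∫ x, pden x * Hfun r σ x

/-- The derivative of `Φ`. -/
noncomputable def Dfun (r σ : ℝ) : ℝ := ∫ x, pden x * dHfun r σ x

lemma integrable_pden_Hfun {r : ℝ} (hr : 0 < r) (σ : ℝ) :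
    Integrable (fun x => pden x * Hfun r σ x) := by
  refine integrable_pden.mono'
    (continuous_pden.mul (continuous_Hfun_x hr)).aestronglyMeasurable ?_
  refine Filter.Eventually.of_forall fun x => ?_
  rw [Real.norm_eq_abs, abs_mul, abs_of_nonneg (pden_nonneg x),
    abs_of_nonneg (Hfun_nonneg hr σ x)]
  nlinarith [Hfun_le_one hr σ x, pden_nonneg x, Hfun_nonneg hr σ x]

lemma integrable_bound (b : ℝ) : Integrable (fun x => pden x * ((b + |x|) / 4)) := by
  have h : (fun x => pden x * ((b + |x|) / 4))
      = fun x => (b/4) * pden x + (1/4) * (|x| * pden x) := by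
    ext x; ring
  rw [h]
  exact (integrable_pden.const_mul _).add (integrable_abs_pden.const_mul _)

lemma integrable_pden_dHfun {r : ℝ} (hr : 0 < r) (σ : ℝ) :
    Integrable (fun x => pden x * dHfun r σ x) := by
  refine (integrable_bound |σ|).mono'
    (continuous_pden.mul (continuous_dHfun_x hr)).aestronglyMeasurable ?_
  refine Filter.Eventually.of_forall fun x => ?_
  rw [Real.norm_eq_abs, abs_mul, abs_of_nonneg (pden_nonneg x)]
  exact mul_le_mul_of_nonneg_left (abs_dHfun_le hr σ x) (pden_nonneg x)

lemma hasDerivAt_Phi {r : ℝ} (hr : 0 < r) (σ₀ : ℝ) :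
    HasDerivAt (Phi r) (Dfun r σ₀) σ₀ := by
  have h := hasDerivAt_integral_of_dominated_loc_of_deriv_le (μ := volume)
    (F := fun σ x => pden x * Hfun r σ x) (F' := fun σ x => pden x * dHfun r σ x)
    (x₀ := σ₀) (bound := fun x => pden x * ((|σ₀| + 1 + |x|) / 4)) (s := Metric.ball σ₀ 1) (Metric.ball_mem_nhds σ₀ one_pos)
    (Filter.Eventually.of_forall fun σ =>
      (continuous_pden.mul (continuous_Hfun_x hr)).aestronglyMeasurable)
    (integrable_pden_Hfun hr σ₀)
    (continuous_pden.mul (continuous_dHfun_x hr)).aestronglyMeasurable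
    ?_ (integrable_bound _) ?_
  · exact h.2
  · refine Filter.Eventually.of_forall fun x => fun σ hσ => ?_
    rw [Real.norm_eq_abs, abs_mul, abs_of_nonneg (pden_nonneg x)]
    refine mul_le_mul_of_nonneg_left ?_ (pden_nonneg x)
    refine (abs_dHfun_le hr σ x).trans ?_
    have : |σ| ≤ |σ₀| + 1 := by
      have := mem_ball_iff_norm.1 hσ
      rw [Real.norm_eq_abs] at this
      calc |σ| = |σ₀ + (σ - σ₀)| := by ring_nf
        _ ≤ |σ₀| + |σ - σ₀| := abs_add_le _ _
        _ ≤ |σ₀| + 1 := by linarith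
    linarith
  · refine Filter.Eventually.of_forall fun x => fun σ _ => ?_
    exact (hasDerivAt_Hfun hr x σ).const_mul (pden x)

lemma continuous_Dfun {r : ℝ} (hr : 0 < r) : Continuous (Dfun r) := by
  rw [continuous_iff_continuousAt]
  intro σ₀
  refine continuousAt_of_dominated (bound := fun x => pden x * ((|σ₀| + 1 + |x|) / 4))
    (Filter.Eventually.of_forall fun σ =>
      (continuous_pden.mul (continuous_dHfun_x hr)).aestronglyMeasurable) ?_
    (integrable_bound _) ?_
  · refine Filter.eventually_of_mem (Metric.ball_mem_nhds σ₀ one_pos) fun σ hσ => ?_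
    refine Filter.Eventually.of_forall fun x => ?_
    rw [Real.norm_eq_abs, abs_mul, abs_of_nonneg (pden_nonneg x)]
    refine mul_le_mul_of_nonneg_left ?_ (pden_nonneg x)
    refine (abs_dHfun_le hr σ x).trans ?_
    have : |σ| ≤ |σ₀| + 1 := by
      have := mem_ball_iff_norm.1 hσ
      rw [Real.norm_eq_abs] at this
      calc |σ| = |σ₀ + (σ - σ₀)| := by ring_nf
        _ ≤ |σ₀| + |σ - σ₀| := abs_add_le _ _
        _ ≤ |σ₀| + 1 := by linarith
    linarith
  · refine Filter.Eventually.of_forall fun x => ?_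
    exact (continuousAt_dHfun_sigma hr x σ₀).const_mul (pden x)

lemma contDiff_Phi {r : ℝ} (hr : 0 < r) : ContDiff ℝ 1 (Phi r) := by
  rw [contDiff_one_iff_deriv]
  have hderiv : deriv (Phi r) = Dfun r := funext fun σ => (hasDerivAt_Phi hr σ).deriv
  exact ⟨fun σ => (hasDerivAt_Phi hr σ).differentiableAt,
    by rw [hderiv]; exact continuous_Dfun hr⟩

lemma Dfun_nonneg {r : ℝ} (hr : 0 < r) {σ : ℝ} (hσ : 0 ≤ σ) : 0 ≤ Dfun r σ := by
  set g : ℝ → ℝ := fun y => r * y * pden y * ((1 + r * Real.exp (σ^2/2 - σ*y))^2)⁻¹ with hg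
  have hdpos : ∀ y : ℝ, 0 < 1 + r * Real.exp (σ^2/2 - σ*y) := fun y => denom_pos hr _
  have hcont : Continuous g := by
    refine ((continuous_const.mul continuous_id').mul continuous_pden).mul
      (Continuous.inv₀ (by fun_prop) fun y => pow_ne_zero 2 (ne_of_gt (hdpos y)))
  have habs : ∀ y : ℝ, |g y| ≤ r * (|y| * pden y) := by
    intro y
    have h1 : ((1 + r * Real.exp (σ^2/2 - σ*y))^2)⁻¹ ≤ 1 := by
      rw [inv_le_one₀ (pow_pos (hdpos y) 2)]
      nlinarith [mul_pos hr (Real.exp_pos (σ^2/2 - σ*y))]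
    have h2 : 0 ≤ ((1 + r * Real.exp (σ^2/2 - σ*y))^2)⁻¹ :=
      le_of_lt (inv_pos.2 (pow_pos (hdpos y) 2))
    rw [hg]
    simp only []
    rw [abs_mul, abs_of_nonneg h2, abs_mul, abs_mul, abs_of_pos hr,
      abs_of_nonneg (pden_nonneg y)]
    calc r * |y| * pden y * ((1 + r * Real.exp (σ^2/2 - σ*y))^2)⁻¹
        ≤ r * |y| * pden y * 1 :=
          mul_le_mul_of_nonneg_left h1
            (mul_nonneg (mul_nonneg hr.le (abs_nonneg y)) (pden_nonneg y))
      _ = r * (|y| * pden y) := by ring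
  have hgint : Integrable g :=
    ((integrable_abs_pden.const_mul r).mono' hcont.aestronglyMeasurable
      (Filter.Eventually.of_forall fun y => by
        rw [Real.norm_eq_abs]; simpa using habs y))
  have hgnegint : Integrable (fun y => g (-y)) := by
    refine (integrable_abs_pden.const_mul r).mono'
      (hcont.comp continuous_neg).aestronglyMeasurable
      (Filter.Eventually.of_forall fun y => ?_)
    rw [Real.norm_eq_abs]
    have := habs (-y)
    rwa [pden_neg, abs_neg] at this
  have hD : Dfun r σ = ∫ y, g y := by
    rw [Dfun]
    have hpt : ∀ x : ℝ, pden x * dHfun r σ x = g (x + σ) := by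
      intro x
      rw [hg]
      simp only []
      have h1 : σ^2/2 - σ*(x+σ) = -(σ^2/2) - σ*x := by ring
      rw [h1, pden_add, dHfun]
      have hE := Real.exp_pos (-(σ^2/2) - σ*x)
      have hd := denom_pos hr (-(σ^2/2) - σ*x)
      field_simp
      ring
    simp_rw [hpt]
    exact integral_add_right_eq_self g σ
  have hneg : ∫ y, g (-y) = ∫ y, g y := by
    have h := MeasureTheory.integral_map_equiv (μ := volume) (MeasurableEquiv.neg ℝ) g
    simp only [MeasurableEquiv.neg_apply] at h
    rw [Measure.map_neg_eq_self (volume : Measure ℝ)] at h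
    exact h.symm
  have h2I : (0:ℝ) ≤ ∫ y, (g y + g (-y)) := by
    refine integral_nonneg fun y => ?_
    show (0:ℝ) ≤ g y + g (-y)
    have hpt : g y + g (-y)
        = r * y * pden y * (((1 + r * Real.exp (σ^2/2 - σ*y))^2)⁻¹
            - ((1 + r * Real.exp (σ^2/2 + σ*y))^2)⁻¹) := by
      rw [hg]
      simp only []
      rw [pden_neg]
      ring_nf
    rw [hpt]
    rcases le_total 0 y with hy | hy
    · have hmono : ((1 + r * Real.exp (σ^2/2 + σ*y))^2)⁻¹
          ≤ ((1 + r * Real.exp (σ^2/2 - σ*y))^2)⁻¹ := by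
        apply inv_anti₀ (pow_pos (hdpos y) 2)
        apply pow_le_pow_left₀ (le_of_lt (hdpos y))
        have : σ^2/2 - σ*y ≤ σ^2/2 + σ*y := by nlinarith
        nlinarith [Real.exp_le_exp.2 this, Real.exp_pos (σ^2/2 - σ*y)]
      have hnn : 0 ≤ r * y * pden y :=
        mul_nonneg (mul_nonneg hr.le hy) (pden_nonneg y)
      nlinarith [mul_nonneg hnn (sub_nonneg.2 hmono)]
    · have hmono : ((1 + r * Real.exp (σ^2/2 - σ*y))^2)⁻¹
          ≤ ((1 + r * Real.exp (σ^2/2 + σ*y))^2)⁻¹ := by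
        apply inv_anti₀ (pow_pos (denom_pos hr _) 2)
        apply pow_le_pow_left₀ (le_of_lt (denom_pos hr _))
        have : σ^2/2 + σ*y ≤ σ^2/2 - σ*y := by nlinarith
        nlinarith [Real.exp_le_exp.2 this, Real.exp_pos (σ^2/2 + σ*y)]
      have hy' : r * y * pden y ≤ 0 := by
        apply mul_nonpos_of_nonpos_of_nonneg _ (pden_nonneg y)
        exact mul_nonpos_of_nonneg_of_nonpos hr.le hy
      nlinarith [mul_nonneg (neg_nonneg.2 hy') (neg_nonneg.2 (sub_nonpos.2 hmono))]
  rw [integral_add hgint hgnegint, hneg] at h2I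
  rw [hD]
  linarith

lemma monotoneOn_Phi {r : ℝ} (hr : 0 < r) : MonotoneOn (Phi r) (Ici 0) := by
  apply monotoneOn_of_deriv_nonneg (convex_Ici 0) ((contDiff_Phi hr).continuous.continuousOn)
  · intro σ _
    exact (hasDerivAt_Phi hr σ).differentiableAt.differentiableWithinAt
  · intro σ hσ
    rw [interior_Ici] at hσ
    rw [(hasDerivAt_Phi hr σ).deriv]
    exact Dfun_nonneg hr hσ.le

lemma integral_gaussianReal_eq (g : ℝ → ℝ) :
    ∫ x, g x ∂(gaussianReal 0 1) = ∫ x, pden x * g x := by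
  rw [gaussianReal_of_var_ne_zero 0 one_ne_zero]
  have hm : Measurable fun x => (pden x).toNNReal :=
    (measurable_gaussianPDFReal 0 1).real_toNNReal
  have h2 : (gaussianPDF 0 1) = fun x => ((pden x).toNNReal : ℝ≥0∞) := by
    funext x; rw [gaussianPDF, ENNReal.ofReal]; rfl
  rw [h2, integral_withDensity_eq_integral_smul hm g]
  congr 1; funext x
  simp [NNReal.smul_def, Real.coe_toNNReal _ (pden_nonneg x)]

lemma integrand_eq {π1 π2 : ℝ} (hpi1 : 0 < π1) (hpi2 : 0 < π2) (hsum : π1 + π2 = 1)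
    {s : ℝ} (hs : 0 ≤ s) (x : ℝ) :
    (π1 * Real.exp (s * (1 / (2 * π1)) + Real.sqrt s * (x / Real.sqrt π1))) /
      (π1 * Real.exp (s * (1 / (2 * π1)) + Real.sqrt s * (x / Real.sqrt π1)) +
        π2 * Real.exp (s * (-(1 + π2) / (2 * π2 ^ 2)) +
          Real.sqrt s * (-(π1 / π2) * (x / Real.sqrt π1))))
    = Hfun (π2/π1) (Real.sqrt s / (Real.sqrt π1 * π2)) x := by
  have hq : 0 < Real.sqrt π1 := Real.sqrt_pos.2 hpi1
  have hq2 : Real.sqrt π1 ^ 2 = π1 := Real.sq_sqrt hpi1.le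
  have ht2 : Real.sqrt s ^ 2 = s := Real.sq_sqrt hs
  set q := Real.sqrt π1
  set t := Real.sqrt s
  set A := s * (1 / (2 * π1)) + t * (x / q) with hA
  set B := s * (-(1 + π2) / (2 * π2 ^ 2)) + t * (-(π1 / π2) * (x / q)) with hB
  have hBA : -((t/(q*π2))^2/2) - (t/(q*π2))*x = B - A := by
    rw [hA, hB]
    have hp1 : π1 = q^2 := hq2.symm
    have hs' : s = t^2 := ht2.symm
    have hp2 : π2 = 1 - q^2 := by rw [hp1] at hsum; linarith
    have h2 : (1:ℝ) - q^2 ≠ 0 := by rw [← hp2]; exact ne_of_gt hpi2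
    rw [hs', hp1, hp2]
    field_simp
    ring
  rw [Hfun, hBA, Real.exp_sub]
  have hA' := Real.exp_pos A
  have hB' := Real.exp_pos B
  have hden : 0 < π1 * Real.exp A + π2 * Real.exp B := by positivity
  have hpos : 0 < 1 + π2/π1 * (Real.exp B / Real.exp A) := by positivity
  rw [inv_eq_one_div, div_eq_div_iff hden.ne' hpos.ne']
  field_simp

end GfunAux

/-- The Gaussian-approximation function `f` is continuously
differentiable and monotone increasing on the interval `(0, π₂]`. -/
theorem gfun_contDiff_and_monotone (π1 π2 : ℝ) (hpi1 : 0 < π1) (hpi2 : 0 < π2)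
    (hsum : π1 + π2 = 1) (hord : π2 ≤ π1) :
    ContDiffOn ℝ 1 (gfun π1 π2) (Set.Ioc 0 π2) ∧
      MonotoneOn (gfun π1 π2) (Set.Ioc 0 π2) := by
  have hr : 0 < π2 / π1 := div_pos hpi2 hpi1
  have hq : 0 < Real.sqrt π1 := Real.sqrt_pos.2 hpi1
  have hc : 0 < Real.sqrt π1 * π2 := mul_pos hq hpi2
  have hEq : ∀ s ∈ Set.Ioc (0:ℝ) π2,
      gfun π1 π2 s = Phi (π2/π1) (Real.sqrt s / (Real.sqrt π1 * π2)) - π1 := by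
    intro s hs
    rw [gfun, integral_gaussianReal_eq, Phi]
    congr 1
    have hfe : (fun x => pden x *
        ((π1 * Real.exp (s * (1 / (2 * π1)) + Real.sqrt s * (x / Real.sqrt π1))) /
          (π1 * Real.exp (s * (1 / (2 * π1)) + Real.sqrt s * (x / Real.sqrt π1)) +
            π2 * Real.exp (s * (-(1 + π2) / (2 * π2 ^ 2)) +
              Real.sqrt s * (-(π1 / π2) * (x / Real.sqrt π1))))))
        = fun x => pden x * Hfun (π2/π1) (Real.sqrt s / (Real.sqrt π1 * π2)) x := by
      funext x
      rw [integrand_eq hpi1 hpi2 hsum hs.1.le x]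
    exact congrArg _ hfe
  constructor
  · refine ContDiffOn.congr ?_ (fun s hs => hEq s hs)
    refine ContDiffOn.mono ?_ Set.Ioc_subset_Ioi_self
    have h1 : ContDiffOn ℝ 1 (fun s : ℝ => Real.sqrt s / (Real.sqrt π1 * π2))
        (Set.Ioi 0) := fun s hs =>
      ((Real.contDiffAt_sqrt (ne_of_gt hs)).contDiffWithinAt).div_const _
    have h2 := (contDiff_Phi hr).comp_contDiffOn h1
    exact h2.sub contDiffOn_const
  · intro s hs t ht hst
    rw [hEq s hs, hEq t ht]
    have h1 : Real.sqrt s / (Real.sqrt π1 * π2) ≤ Real.sqrt t / (Real.sqrt π1 * π2) := by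
      gcongr
    have h2 := monotoneOn_Phi hr (Set.mem_Ici.2 (by positivity))
      (Set.mem_Ici.2 (by positivity)) h1
    linarith

end AsymIsing
end
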